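/- Let U be an n×d real matrix with orthonormal columns (U^T U = I_d) and let D be an n×n diagonal matrix with strictly positive diagonal entries. Then the d×d matrix U^T D U − (U^T D^{-1} U)^{-1} is positive semidefinite. -/

import Mathlib

open Matrix

private lemma quad_form (n d : ℕ) (U : Matrix (Fin n) (Fin d) ℝ) (v : Fin n → ℝ)
    (x : Fin d → ℝ) :
    x ⬝ᵥ (Uᵀ * Matrix.diagonal v * U) *ᵥ x = ∑ i, v i * (U *ᵥ x) i ^ 2 := by
  rw [Matrix.dotProduct_mulVec, ← Matrix.vecMul_vecMul, ← Matrix.vecMul_vecMul,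
    Matrix.vecMul_transpose, ← Matrix.dotProduct_mulVec]
  simp only [Matrix.vecMul_diagonal, dotProduct]
  congr 1; ext i; ring

private lemma dot_eq (n d : ℕ) (U : Matrix (Fin n) (Fin d) ℝ) (hU : Uᵀ * U = 1)
    (x y : Fin d → ℝ) : x ⬝ᵥ y = (U *ᵥ x) ⬝ᵥ (U *ᵥ y) := by
  have : y = (Uᵀ * U) *ᵥ y := by rw [hU, Matrix.one_mulVec]
  conv_lhs => rw [this]
  rw [← Matrix.mulVec_mulVec, Matrix.dotProduct_mulVec, Matrix.vecMul_transpose]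

theorem stmt_0 (n d : ℕ) (U : Matrix (Fin n) (Fin d) ℝ) (hU : Uᵀ * U = 1)
    (w : Fin n → ℝ) (hw : ∀ i, 0 < w i) :
    (Uᵀ * Matrix.diagonal w * U - (Uᵀ * (Matrix.diagonal w)⁻¹ * U)⁻¹).PosSemidef := by
  have hdw : (Matrix.diagonal w)⁻¹ = Matrix.diagonal (fun i => (w i)⁻¹) := by
    apply Matrix.inv_eq_right_inv
    rw [Matrix.diagonal_mul_diagonal]
    have : (fun i => w i * (w i)⁻¹) = fun _ => (1:ℝ) :=
      funext fun i => mul_inv_cancel₀ (hw i).ne'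
    rw [this, Matrix.diagonal_one]
  set A := Uᵀ * Matrix.diagonal w * U with hA
  set B := Uᵀ * (Matrix.diagonal w)⁻¹ * U with hBdef
  have hBquad : ∀ x : Fin d → ℝ, x ⬝ᵥ B *ᵥ x = ∑ i, (w i)⁻¹ * (U *ᵥ x) i ^ 2 := by
    intro x; rw [hBdef, hdw]; exact quad_form n d U _ x
  have hAquad : ∀ x : Fin d → ℝ, x ⬝ᵥ A *ᵥ x = ∑ i, w i * (U *ᵥ x) i ^ 2 := fun x =>
    quad_form n d U w x
  have hUinj : ∀ x : Fin d → ℝ, U *ᵥ x = 0 → x = 0 := by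
    intro x hx
    have : (Uᵀ * U) *ᵥ x = 0 := by rw [← Matrix.mulVec_mulVec, hx, Matrix.mulVec_zero]
    rwa [hU, Matrix.one_mulVec] at this
  have hherm : ∀ v : Fin n → ℝ, (Uᵀ * Matrix.diagonal v * U).IsHermitian := by
    intro v
    unfold Matrix.IsHermitian
    ext i j
    simp [Matrix.conjTranspose, Matrix.transpose_mul, Matrix.mul_assoc, Matrix.diagonal_transpose]
  have hB : B.PosDef := by
    refine .of_dotProduct_mulVec_pos (by rw [hBdef, hdw]; exact hherm _) fun x hx => ?_
    simp only [star_trivial, RCLike.re_to_real]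
    rw [hBquad x]
    have hUx : U *ᵥ x ≠ 0 := fun h => hx (hUinj x h)
    obtain ⟨j, hj⟩ : ∃ j, (U *ᵥ x) j ≠ 0 := by
      by_contra h; push_neg at h; exact hUx (funext h)
    exact Finset.sum_pos' (fun i _ => mul_nonneg (inv_nonneg.2 (hw i).le) (sq_nonneg _))
      ⟨j, Finset.mem_univ j, mul_pos (inv_pos.2 (hw j)) (sq_pos_of_ne_zero hj)⟩
  have hBinv : B⁻¹.PosDef := hB.inv
  have hBBinv : B * B⁻¹ = 1 := Matrix.mul_nonsing_inv B hB.det_pos.ne'.isUnit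
  refine .of_dotProduct_mulVec_nonneg ((hA ▸ hherm w).sub hBinv.isHermitian) fun x => ?_
  simp only [star_trivial, Matrix.sub_mulVec, dotProduct_sub]
  rw [sub_nonneg]
  set y := B⁻¹ *ᵥ x with hy
  have hBy : B *ᵥ y = x := by
    rw [hy, Matrix.mulVec_mulVec, hBBinv, Matrix.one_mulVec]
  set p := x ⬝ᵥ y with hp
  have hp0 : 0 ≤ p := by
    have := hBinv.posSemidef.dotProduct_mulVec_nonneg x
    simpa [hp, hy] using this
  have hyBy : y ⬝ᵥ B *ᵥ y = p := by rw [hBy, dotProduct_comm]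
  -- Cauchy-Schwarz
  have hcs : p ^ 2 ≤ (x ⬝ᵥ A *ᵥ x) * p := by
    have key := Finset.sum_mul_sq_le_sq_mul_sq Finset.univ
      (fun i => Real.sqrt (w i) * (U *ᵥ x) i)
      (fun i => Real.sqrt ((w i)⁻¹) * (U *ᵥ y) i)
    have h1 : ∀ i : Fin n, Real.sqrt (w i) * (U *ᵥ x) i * (Real.sqrt ((w i)⁻¹) * (U *ᵥ y) i)
        = (U *ᵥ x) i * (U *ᵥ y) i := by
      intro i
      have : Real.sqrt (w i) * Real.sqrt ((w i)⁻¹) = 1 := by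
        rw [← Real.sqrt_mul (hw i).le, mul_inv_cancel₀ (hw i).ne', Real.sqrt_one]
      calc Real.sqrt (w i) * (U *ᵥ x) i * (Real.sqrt ((w i)⁻¹) * (U *ᵥ y) i)
          = (Real.sqrt (w i) * Real.sqrt ((w i)⁻¹)) * ((U *ᵥ x) i * (U *ᵥ y) i) := by ring
        _ = (U *ᵥ x) i * (U *ᵥ y) i := by rw [this, one_mul]
    have h2 : ∀ i : Fin n, (Real.sqrt (w i) * (U *ᵥ x) i) ^ 2 = w i * (U *ᵥ x) i ^ 2 := by
      intro i; rw [mul_pow, Real.sq_sqrt (hw i).le]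
    have h3 : ∀ i : Fin n, (Real.sqrt ((w i)⁻¹) * (U *ᵥ y) i) ^ 2 = (w i)⁻¹ * (U *ᵥ y) i ^ 2 := by
      intro i; rw [mul_pow, Real.sq_sqrt (inv_nonneg.2 (hw i).le)]
    simp only [h1, h2, h3] at key
    calc p ^ 2 = ((U *ᵥ x) ⬝ᵥ (U *ᵥ y)) ^ 2 := by rw [hp, dot_eq n d U hU]
      _ ≤ (∑ i, w i * (U *ᵥ x) i ^ 2) * (∑ i, (w i)⁻¹ * (U *ᵥ y) i ^ 2) := by
          simpa [dotProduct] using key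
      _ = (x ⬝ᵥ A *ᵥ x) * p := by rw [← hAquad, ← hBquad, hyBy]
  show p ≤ x ⬝ᵥ A *ᵥ x
  rcases eq_or_lt_of_le hp0 with h0 | hpos
  · rw [← h0, hAquad]
    exact Finset.sum_nonneg fun i _ => mul_nonneg (hw i).le (sq_nonneg _)
  · have h : p * p ≤ (x ⬝ᵥ A *ᵥ x) * p := by rw [← sq]; exact hcs
    exact le_of_mul_le_mul_right h hpos
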